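/- Let (ρ₁,…,ρₙ) be real numbers in (0,1) with ρ₁+⋯+ρₙ < 1 (so self-similar sets with these ratios in ℝ exist with strong separation). If D and D' are two attractors of IFSs on ℝ consisting of similarities with contraction ratios exactly ρ₁,…,ρₙ, each satisfying the strong separation condition, then D and D' are Lipschitz equivalent, i.e., there is a bi-Lipschitz bijection f : D → D'. -/

import Mathlib

noncomputable section

open Set Metric MeasureTheory

/-- Distance between two sets. -/
def setDist {X : Type*} [MetricSpace X] (A B : Set X) : ℝ := sInf (Set.image2 dist A B)

/-- Lipschitz equivalence of two sets: a bi-Lipschitz bijection between them. -/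
def LipEquivOn {X Y : Type*} [MetricSpace X] [MetricSpace Y] (E : Set X) (F : Set Y) : Prop :=
  ∃ (f : X → Y) (c c' : ℝ), 0 < c ∧ c ≤ c' ∧ Set.BijOn f E F ∧
    ∀ x ∈ E, ∀ y ∈ E, c * dist x y ≤ dist (f x) (f y) ∧ dist (f x) (f y) ≤ c' * dist x y

/-- The affine contraction `x ↦ ρ i * x + t i`. -/
def affMap (r t : ℕ → ℝ) (i : ℕ) (x : ℝ) : ℝ := r i * x + t i

/-- Composition of the affine maps along a word (first letter outermost). -/
def affWord (r t : ℕ → ℝ) : List ℕ → ℝ → ℝ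
  | [] => id
  | i :: w => affMap r t i ∘ affWord r t w

/-- Cylinder of a general IFS for a word over `Fin n`. -/
def cylW {X : Type*} {n : ℕ} (Ψ : Fin n → X → X) (F : Set X) (w : List (Fin n)) : Set X :=
  (w.foldr (fun i g => Ψ i ∘ g) id) '' F

/-- A (separable) contraction vector `(ρ 0, …, ρ (n-1))` in `ℝ`. -/
structure ContractionVec (n : ℕ) (ρ : ℕ → ℝ) : Prop where
  three_le : 3 ≤ n
  pos : ∀ i, i < n → 0 < ρ i
  lt_one : ∀ i, i < n → ρ i < 1
  sum_lt : (∑ i ∈ Finset.range n, ρ i) < 1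

/-- The touching IFS of the standing setup, together with its attractor `T`. -/
structure TouchingIFS (n : ℕ) (ρ : ℕ → ℝ) where
  t : ℕ → ℝ
  T : Set ℝ
  order : ∀ i, i + 1 < n → affMap ρ t i 1 ≤ affMap ρ t (i + 1) 0
  left0 : affMap ρ t 0 0 = 0
  right1 : affMap ρ t (n - 1) 1 = 1
  touch_ex : ∃ i, i + 1 < n ∧ affMap ρ t i 1 = affMap ρ t (i + 1) 0
  compactT : IsCompact T
  nonemptyT : T.Nonempty
  invT : T = ⋃ i ∈ Finset.range n, affMap ρ t i '' T

/-- The dust-like, equally spaced IFS of the standing setup, with attractor `D`. -/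
structure DustIFS (n : ℕ) (ρ : ℕ → ℝ) where
  d : ℕ → ℝ
  D : Set ℝ
  left0 : affMap ρ d 0 0 = 0
  right1 : affMap ρ d (n - 1) 1 = 1
  equal_gap : ∀ i, i + 1 < n →
    affMap ρ d (i + 1) 0 - affMap ρ d i 1 = (1 - ∑ j ∈ Finset.range n, ρ j) / (n - 1)
  compactD : IsCompact D
  nonemptyD : D.Nonempty
  invD : D = ⋃ i ∈ Finset.range n, affMap ρ d i '' D

variable {n : ℕ} {ρ : ℕ → ℝ}

/-- Cylinder `T_w`. -/
def TouchingIFS.cyl (S : TouchingIFS n ρ) (w : List ℕ) : Set ℝ := affWord ρ S.t w '' S.T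

/-- `i` is a (left) touching letter. -/
def TouchingIFS.touch (S : TouchingIFS n ρ) (i : ℕ) : Prop :=
  i + 1 < n ∧ affMap ρ S.t i 1 = affMap ρ S.t (i + 1) 0

/-- Left touching patch `L_k(T_w)` (with `α` the initial touching run length). -/
def TouchingIFS.patchL (S : TouchingIFS n ρ) (α : ℕ) (w : List ℕ) (k : ℕ) : Set ℝ :=
  ⋃ j ∈ Finset.range α, S.cyl (w ++ List.replicate k 0 ++ [j])

/-- Right touching patch `R_k(T_w)` (with `β` the final touching run length). -/
def TouchingIFS.patchR (S : TouchingIFS n ρ) (β : ℕ) (w : List ℕ) (k : ℕ) : Set ℝ :=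
  ⋃ j ∈ Finset.Ico (n - β) n, S.cyl (w ++ List.replicate k (n - 1) ++ [j])

/-- `α` is the number of successive touching intervals at the beginning. -/
def TouchingIFS.alphaRun (S : TouchingIFS n ρ) (α : ℕ) : Prop :=
  1 ≤ α ∧ α < n ∧ (∀ i, i + 1 < α → S.touch i) ∧ ¬ S.touch (α - 1)

/-- `β` is the number of successive touching intervals at the end. -/
def TouchingIFS.betaRun (S : TouchingIFS n ρ) (β : ℕ) : Prop :=
  1 ≤ β ∧ β < n ∧ (∀ i, n - β ≤ i → i + 1 < n → S.touch i) ∧ ¬ S.touch (n - β - 1)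

/-- Cylinder `D_w`. -/
def DustIFS.cyl (Q : DustIFS n ρ) (w : List ℕ) : Set ℝ := affWord ρ Q.d w '' Q.D

/-- Left patch `L_k(D_w)`. -/
def DustIFS.patchL (Q : DustIFS n ρ) (α : ℕ) (w : List ℕ) (k : ℕ) : Set ℝ :=
  ⋃ j ∈ Finset.range α, Q.cyl (w ++ List.replicate k 0 ++ [j])

/-- Right patch `R_k(D_w)`. -/
def DustIFS.patchR (Q : DustIFS n ρ) (β : ℕ) (w : List ℕ) (k : ℕ) : Set ℝ :=
  ⋃ j ∈ Finset.Ico (n - β) n, Q.cyl (w ++ List.replicate k (n - 1) ++ [j])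

/-- `τ k` is the unique positive integer with `ρₙᵏ ρ₁ < ρ₁ ^ τ(k) ≤ ρₙᵏ`. -/
def tauSpec (ρ : ℕ → ℝ) (n : ℕ) (τ : ℕ → ℕ) : Prop :=
  ∀ k, 1 ≤ k → 1 ≤ τ k ∧ ρ (n - 1) ^ k * ρ 0 < ρ 0 ^ τ k ∧ ρ 0 ^ τ k ≤ ρ (n - 1) ^ k

/-- `Cᵏ = R_k(T_{i₀}) ∪ L_{τ(k)}(T_{i₀+1})`. -/
def Cset (S : TouchingIFS n ρ) (α β i₀ : ℕ) (τ : ℕ → ℕ) (k : ℕ) : Set ℝ :=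
  S.patchR β [i₀] k ∪ S.patchL α [i₀ + 1] (τ k)

/-- The touching letter `i` is left substitutable. -/
def TouchingIFS.LeftSub (S : TouchingIFS n ρ) (α : ℕ) (i : ℕ) : Prop :=
  ∃ (w : List ℕ) (a : ℕ) (k k' : ℕ), (∀ b ∈ w ++ [a], b < n) ∧
    Metric.diam (S.patchL α [i + 1] k) = Metric.diam (S.patchL α (i :: (w ++ [a])) k') ∧
    a ≠ 0 ∧ ∀ ℓ, S.touch ℓ → a ≠ ℓ + 1

/-- The touching letter `i` is right substitutable. -/
def TouchingIFS.RightSub (S : TouchingIFS n ρ) (β : ℕ) (i : ℕ) : Prop :=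
  ∃ (w : List ℕ) (a : ℕ) (k k' : ℕ), (∀ b ∈ w ++ [a], b < n) ∧
    Metric.diam (S.patchR β [i] k) = Metric.diam (S.patchR β ((i + 1) :: (w ++ [a])) k') ∧
    a ≠ n - 1 ∧ ¬ S.touch a

/-- Convex hull of a bounded set of reals: the minimal closed interval containing it. -/
def CH (B : Set ℝ) : Set ℝ := Set.Icc (sInf B) (sSup B)

/-- `[a,b]` is a maximal run of touching letters (a first-level connected component). -/
def TouchingIFS.run (S : TouchingIFS n ρ) (a b : ℕ) : Prop :=
  a ≤ b ∧ b < n ∧ (∀ i, a ≤ i → i < b → S.touch i) ∧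
  (a = 0 ∨ ¬ S.touch (a - 1)) ∧ (b = n - 1 ∨ ¬ S.touch b)

/-- Membership in the class `𝒯⁽¹⁾`: a `T`-separate copy `Ψ_w(T⁽¹⁾_j)`. -/
def TouchingIFS.T1mem (S : TouchingIFS n ρ) (X : Set ℝ) : Prop :=
  ∃ (w : List ℕ) (a b : ℕ), (∀ c ∈ w, c < n) ∧ S.run a b ∧
    X = affWord ρ S.t w '' (⋃ j ∈ Finset.Icc a b, S.cyl [j]) ∧
    0 < setDist X (S.T \ X)

/-- Membership in the class `𝒯⁽²⁾`: a copy `Ψ_w(T⁽²⁾_i) = Ψ_w(R₀(T_i) ∪ L₀(T_{i+1}))`. -/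
def TouchingIFS.T2mem (S : TouchingIFS n ρ) (α β : ℕ) (X : Set ℝ) : Prop :=
  ∃ (w : List ℕ) (i : ℕ), (∀ c ∈ w, c < n) ∧ S.touch i ∧
    X = affWord ρ S.t w '' (S.patchR β [i] 0 ∪ S.patchL α [i + 1] 0)

/-- An admissible family for the simple decomposition of `E` by the `A i`. -/
def GoodFam (E : Set ℝ) {k : ℕ} (A : Fin k → Set ℝ) (𝒮 : Finset (Set ℝ)) : Prop :=
  (∀ B ∈ 𝒮, IsCompact B ∧ B ⊆ E) ∧ (⋃ B ∈ 𝒮, B) = E ∧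
  (∀ B ∈ 𝒮, ∀ B' ∈ 𝒮, B ≠ B' → CH B ∩ CH B' = ∅) ∧ (∀ i, A i ∈ 𝒮)


set_option maxHeartbeats 1000000


namespace DustProofAux

lemma dist_aff (r t a b : ℝ) (hr : 0 ≤ r) : dist (r * a + t) (r * b + t) = r * dist a b := by
  rw [Real.dist_eq, Real.dist_eq, show r * a + t - (r * b + t) = r * (a - b) by ring,
    abs_mul, abs_of_nonneg hr]

structure Setup (n : ℕ) : Type where
  ρ : Fin n → ℝ
  d : Fin n → ℝ
  D : Set ℝ
  hn : 1 ≤ n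
  hpos : ∀ i, 0 < ρ i
  hlt : ∀ i, ρ i < 1
  hDc : IsCompact D
  hDne : D.Nonempty
  hDinv : D = ⋃ i, (fun x => ρ i * x + d i) '' D

variable {n : ℕ}

namespace Setup

def iz (S : Setup n) : Fin n := ⟨0, S.hn⟩

lemma univ_ne (S : Setup n) : (Finset.univ : Finset (Fin n)).Nonempty :=
  ⟨S.iz, Finset.mem_univ _⟩

def c (S : Setup n) : ℝ := Finset.univ.sup' S.univ_ne S.ρ

lemma le_c (S : Setup n) (i : Fin n) : S.ρ i ≤ S.c :=
  Finset.le_sup' _ (Finset.mem_univ _)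

lemma c_nonneg (S : Setup n) : 0 ≤ S.c := le_trans (S.hpos S.iz).le (S.le_c _)

lemma c_lt_one (S : Setup n) : S.c < 1 :=
  (Finset.sup'_lt_iff S.univ_ne).mpr fun i _ => S.hlt i

def M (S : Setup n) : ℝ := Finset.univ.sup' S.univ_ne (fun i => |S.d i|)

lemma le_M (S : Setup n) (i : Fin n) : |S.d i| ≤ S.M :=
  Finset.le_sup' (fun j => |S.d j|) (Finset.mem_univ i)

lemma M_nonneg (S : Setup n) : 0 ≤ S.M := le_trans (abs_nonneg _) (S.le_M S.iz)

def piTerm (S : Setup n) (σ : ℕ → Fin n) (m : ℕ) : ℝ :=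
  (∏ l ∈ Finset.range m, S.ρ (σ l)) * S.d (σ m)

lemma prod_nonneg' (S : Setup n) (σ : ℕ → Fin n) (m : ℕ) :
    0 ≤ ∏ l ∈ Finset.range m, S.ρ (σ l) :=
  Finset.prod_nonneg fun _ _ => (S.hpos _).le

lemma prod_pos' (S : Setup n) (σ : ℕ → Fin n) (m : ℕ) :
    0 < ∏ l ∈ Finset.range m, S.ρ (σ l) :=
  Finset.prod_pos fun _ _ => S.hpos _

lemma prod_le_pow (S : Setup n) (σ : ℕ → Fin n) (m : ℕ) :
    (∏ l ∈ Finset.range m, S.ρ (σ l)) ≤ S.c ^ m := by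
  calc (∏ l ∈ Finset.range m, S.ρ (σ l)) ≤ ∏ _l ∈ Finset.range m, S.c :=
        Finset.prod_le_prod (fun i _ => (S.hpos _).le) (fun i _ => S.le_c _)
    _ = S.c ^ m := by simp

lemma abs_piTerm_le (S : Setup n) (σ : ℕ → Fin n) (m : ℕ) :
    |S.piTerm σ m| ≤ S.M * S.c ^ m := by
  rw [piTerm, abs_mul, abs_of_nonneg (S.prod_nonneg' σ m)]
  calc (∏ l ∈ Finset.range m, S.ρ (σ l)) * |S.d (σ m)|
      ≤ S.c ^ m * S.M := by
        apply mul_le_mul (S.prod_le_pow σ m) (S.le_M _) (abs_nonneg _)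
        exact pow_nonneg S.c_nonneg m
    _ = S.M * S.c ^ m := mul_comm _ _

lemma summable_geo (S : Setup n) : Summable (fun m => S.M * S.c ^ m) :=
  (summable_geometric_of_lt_one S.c_nonneg S.c_lt_one).mul_left _

lemma summable (S : Setup n) (σ : ℕ → Fin n) : Summable (S.piTerm σ) := by
  apply Summable.of_abs
  exact Summable.of_nonneg_of_le (fun m => abs_nonneg _) (S.abs_piTerm_le σ) S.summable_geo

def piA (S : Setup n) (σ : ℕ → Fin n) : ℝ := ∑' m, S.piTerm σ m

lemma abs_piA_le (S : Setup n) (σ : ℕ → Fin n) : |S.piA σ| ≤ S.M * (1 - S.c)⁻¹ := by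
  have h1 : |S.piA σ| ≤ ∑' m, |S.piTerm σ m| := by
    simpa [Real.norm_eq_abs, piA] using norm_tsum_le_tsum_norm (f := S.piTerm σ)
      (by simpa [Real.norm_eq_abs] using (S.summable σ).abs)
  have h2 : (∑' m, |S.piTerm σ m|) ≤ ∑' m, S.M * S.c ^ m :=
    Summable.tsum_le_tsum (S.abs_piTerm_le σ) (S.summable σ).abs S.summable_geo
  have h3 : (∑' m, S.M * S.c ^ m) = S.M * (1 - S.c)⁻¹ := by
    rw [tsum_mul_left, tsum_geometric_of_lt_one S.c_nonneg S.c_lt_one]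
  linarith

lemma piTerm_succ (S : Setup n) (σ : ℕ → Fin n) (m : ℕ) :
    S.piTerm σ (m + 1) = S.ρ (σ 0) * S.piTerm (σ ∘ Nat.succ) m := by
  simp only [piTerm, Finset.prod_range_succ', Function.comp]
  ring

lemma piA_shift (S : Setup n) (σ : ℕ → Fin n) :
    S.piA σ = S.ρ (σ 0) * S.piA (σ ∘ Nat.succ) + S.d (σ 0) := by
  have h := Summable.tsum_eq_zero_add (S.summable σ)
  have h2 : (∑' m, S.piTerm σ (m + 1)) = S.ρ (σ 0) * S.piA (σ ∘ Nat.succ) := by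
    rw [piA, ← tsum_mul_left]
    exact tsum_congr fun m => S.piTerm_succ σ m
  have h0 : S.piTerm σ 0 = S.d (σ 0) := by simp [piTerm]
  rw [piA, h, h0, h2]; ring

lemma mem_piece (S : Setup n) (i : Fin n) {z : ℝ} (hz : z ∈ S.D) :
    S.ρ i * z + S.d i ∈ S.D := by
  rw [S.hDinv]
  exact Set.mem_iUnion.mpr ⟨i, ⟨z, hz, rfl⟩⟩

/-- Word maps. -/
def wmap (S : Setup n) : (ℕ → Fin n) → ℕ → ℝ → ℝ
  | _, 0, x => x
  | σ, (k+1), x => S.ρ (σ 0) * S.wmap (σ ∘ Nat.succ) k x + S.d (σ 0)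

lemma piA_eq_wmap (S : Setup n) : ∀ (k : ℕ) (σ : ℕ → Fin n),
    S.piA σ = S.wmap σ k (S.piA fun m => σ (m + k)) := by
  intro k
  induction k with
  | zero => intro σ; rfl
  | succ k ih =>
    intro σ
    rw [S.piA_shift σ, ih (σ ∘ Nat.succ)]
    rfl

lemma wmap_congr (S : Setup n) : ∀ (k : ℕ) (σ τ : ℕ → Fin n) (x : ℝ),
    (∀ l, l < k → σ l = τ l) → S.wmap σ k x = S.wmap τ k x := by
  intro k
  induction k with
  | zero => intros; rfl
  | succ k ih =>
    intro σ τ x h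
    show S.ρ (σ 0) * S.wmap (σ ∘ Nat.succ) k x + S.d (σ 0) = _
    rw [h 0 (Nat.succ_pos k), ih (σ ∘ Nat.succ) (τ ∘ Nat.succ) x
      (fun l hl => h (l + 1) (Nat.succ_lt_succ hl))]
    rfl

lemma wmap_mem (S : Setup n) : ∀ (k : ℕ) (σ : ℕ → Fin n) {x : ℝ},
    x ∈ S.D → S.wmap σ k x ∈ S.D := by
  intro k
  induction k with
  | zero => intro σ x hx; exact hx
  | succ k ih =>
    intro σ x hx
    exact S.mem_piece (σ 0) (ih (σ ∘ Nat.succ) hx)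

lemma dist_wmap (S : Setup n) : ∀ (k : ℕ) (σ : ℕ → Fin n) (x y : ℝ),
    dist (S.wmap σ k x) (S.wmap σ k y) =
      (∏ l ∈ Finset.range k, S.ρ (σ l)) * dist x y := by
  intro k
  induction k with
  | zero => intro σ x y; simp [wmap]
  | succ k ih =>
    intro σ x y
    show dist (S.ρ (σ 0) * S.wmap (σ ∘ Nat.succ) k x + S.d (σ 0))
      (S.ρ (σ 0) * S.wmap (σ ∘ Nat.succ) k y + S.d (σ 0)) = _
    rw [dist_aff _ _ _ _ (S.hpos (σ 0)).le, ih (σ ∘ Nat.succ) x y,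
      Finset.prod_range_succ']
    simp only [Function.comp]
    ring

lemma piA_mem (S : Setup n) (σ : ℕ → Fin n) : S.piA σ ∈ S.D := by
  obtain ⟨x0, hx0⟩ := S.hDne
  set B : ℝ := S.M * (1 - S.c)⁻¹ + |x0| with hB
  have hbd : ∀ σ : ℕ → Fin n, infDist (S.piA σ) S.D ≤ B := by
    intro σ
    calc infDist (S.piA σ) S.D ≤ dist (S.piA σ) x0 := infDist_le_dist_of_mem hx0
      _ ≤ |S.piA σ| + |x0| := by
          rw [Real.dist_eq]; exact (abs_sub _ _)
      _ ≤ B := by have := S.abs_piA_le σ; rw [hB]; linarith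
  have hstep : ∀ σ : ℕ → Fin n,
      infDist (S.piA σ) S.D ≤ S.c * infDist (S.piA (σ ∘ Nat.succ)) S.D := by
    intro σ
    obtain ⟨y, hy, hdy⟩ := S.hDc.exists_infDist_eq_dist S.hDne (S.piA (σ ∘ Nat.succ))
    calc infDist (S.piA σ) S.D ≤ dist (S.piA σ) (S.ρ (σ 0) * y + S.d (σ 0)) :=
          infDist_le_dist_of_mem (S.mem_piece (σ 0) hy)
      _ = S.ρ (σ 0) * dist (S.piA (σ ∘ Nat.succ)) y := by
          rw [S.piA_shift σ, dist_aff _ _ _ _ (S.hpos (σ 0)).le]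
      _ ≤ S.c * infDist (S.piA (σ ∘ Nat.succ)) S.D := by
          rw [← hdy]
          exact mul_le_mul (S.le_c _) le_rfl (by rw [hdy]; exact dist_nonneg) S.c_nonneg
  have hiter : ∀ (k : ℕ) (σ : ℕ → Fin n), infDist (S.piA σ) S.D ≤ S.c ^ k * B := by
    intro k
    induction k with
    | zero => intro σ; simpa using hbd σ
    | succ k ih =>
      intro σ
      calc infDist (S.piA σ) S.D ≤ S.c * infDist (S.piA (σ ∘ Nat.succ)) S.D := hstep σ
        _ ≤ S.c * (S.c ^ k * B) :=
            mul_le_mul_of_nonneg_left (ih (σ ∘ Nat.succ)) S.c_nonneg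
        _ = S.c ^ (k + 1) * B := by ring
  have h0 : Filter.Tendsto (fun k => S.c ^ k * B) Filter.atTop (nhds 0) := by
    have := (tendsto_pow_atTop_nhds_zero_of_lt_one S.c_nonneg S.c_lt_one).mul_const B
    simpa using this
  have hle : infDist (S.piA σ) S.D ≤ 0 :=
    ge_of_tendsto h0 (Filter.Eventually.of_forall fun k => hiter k σ)
  have h00 : infDist (S.piA σ) S.D = 0 := le_antisymm hle infDist_nonneg
  exact ((IsClosed.mem_iff_infDist_zero S.hDc.isClosed S.hDne).mpr h00)

-- Choice of predecessor.
open Classical in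
def nxtP (S : Setup n) (x : ℝ) : Fin n × ℝ :=
  if h : ∃ p : Fin n × ℝ, p.2 ∈ S.D ∧ S.ρ p.1 * p.2 + S.d p.1 = x then h.choose
  else (S.iz, x)

lemma nxtP_spec (S : Setup n) {x : ℝ} (hx : x ∈ S.D) :
    (S.nxtP x).2 ∈ S.D ∧ S.ρ (S.nxtP x).1 * (S.nxtP x).2 + S.d (S.nxtP x).1 = x := by
  have h : ∃ p : Fin n × ℝ, p.2 ∈ S.D ∧ S.ρ p.1 * p.2 + S.d p.1 = x := by
    rw [S.hDinv] at hx
    obtain ⟨i, z, hz, e⟩ := by simpa using hx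
    exact ⟨(i, z), hz, e⟩
  rw [nxtP, dif_pos h]
  exact h.choose_spec

def nxt (S : Setup n) (x : ℝ) : ℝ := (S.nxtP x).2

def addr (S : Setup n) (x : ℝ) (k : ℕ) : Fin n := (S.nxtP (S.nxt^[k] x)).1

lemma addr_shift (S : Setup n) (x : ℝ) : S.addr x ∘ Nat.succ = S.addr (S.nxt x) := by
  funext k
  simp only [addr, Function.comp]
  rw [Function.iterate_succ_apply]

lemma addr_zero (S : Setup n) (x : ℝ) : S.addr x 0 = (S.nxtP x).1 := rfl

lemma piA_addr (S : Setup n) {x : ℝ} (hx : x ∈ S.D) : S.piA (S.addr x) = x := by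
  obtain ⟨R, hR⟩ := S.hDc.isBounded.exists_norm_le
  set B : ℝ := S.M * (1 - S.c)⁻¹ + R with hBdef
  have hkey : ∀ (k : ℕ) (x : ℝ), x ∈ S.D → dist (S.piA (S.addr x)) x ≤ S.c ^ k * B := by
    intro k
    induction k with
    | zero =>
      intro x hx
      have h1 := S.abs_piA_le (S.addr x)
      have h2 : |x| ≤ R := by simpa [Real.norm_eq_abs] using hR x hx
      rw [Real.dist_eq]
      have h3 := abs_sub (S.piA (S.addr x)) x
      simp only [pow_zero, one_mul, hBdef]
      linarith
    | succ k ih =>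
      intro x hx
      obtain ⟨hmem, heq⟩ := S.nxtP_spec hx
      have e1 : S.piA (S.addr x) =
          S.ρ ((S.nxtP x).1) * S.piA (S.addr (S.nxt x)) + S.d ((S.nxtP x).1) := by
        rw [S.piA_shift (S.addr x), S.addr_shift x, addr_zero]
      have e2 : dist (S.ρ ((S.nxtP x).1) * S.piA (S.addr (S.nxt x)) + S.d ((S.nxtP x).1))
            (S.ρ ((S.nxtP x).1) * (S.nxt x) + S.d ((S.nxtP x).1))
          = S.ρ ((S.nxtP x).1) * dist (S.piA (S.addr (S.nxt x))) (S.nxt x) :=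
        dist_aff _ _ _ _ (S.hpos _).le
      have hd : dist (S.piA (S.addr x)) x =
          S.ρ ((S.nxtP x).1) * dist (S.piA (S.addr (S.nxt x))) (S.nxt x) := by
        rw [e1, ← e2]
        congr 1
        exact heq.symm
      calc dist (S.piA (S.addr x)) x
          = S.ρ ((S.nxtP x).1) * dist (S.piA (S.addr (S.nxt x))) (S.nxt x) := hd
        _ ≤ S.c * (S.c ^ k * B) :=
            mul_le_mul (S.le_c _) (ih (S.nxt x) hmem) dist_nonneg S.c_nonneg
        _ = S.c ^ (k + 1) * B := by ring
  have h0 : Filter.Tendsto (fun k => S.c ^ k * B) Filter.atTop (nhds 0) := by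
    have := (tendsto_pow_atTop_nhds_zero_of_lt_one S.c_nonneg S.c_lt_one).mul_const B
    simpa using this
  have hle : dist (S.piA (S.addr x)) x ≤ 0 :=
    ge_of_tendsto h0 (Filter.Eventually.of_forall fun k => hkey k x hx)
  have := le_antisymm hle dist_nonneg
  exact dist_le_zero.mp hle

/-- first-letter membership of the tail point -/
lemma tail_mem_piece (S : Setup n) (σ : ℕ → Fin n) (k : ℕ) :
    S.piA (fun m => σ (m + k)) ∈ (fun x => S.ρ (σ k) * x + S.d (σ k)) '' S.D := by
  have h := S.piA_shift (fun m => σ (m + k))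
  simp only [Nat.zero_add] at h
  exact ⟨S.piA ((fun m => σ (m + k)) ∘ Nat.succ), S.piA_mem _, h.symm⟩

lemma dist_piA_bounds (S : Setup n) {δ : ℝ}
    (hδ : ∀ i j, i ≠ j → ∀ a ∈ (fun x => S.ρ i * x + S.d i) '' S.D,
      ∀ b ∈ (fun x => S.ρ j * x + S.d j) '' S.D, δ ≤ dist a b)
    (σ τ : ℕ → Fin n) (k : ℕ) (hpre : ∀ l, l < k → σ l = τ l) (hk : σ k ≠ τ k) :
    (∏ l ∈ Finset.range k, S.ρ (σ l)) * δ ≤ dist (S.piA σ) (S.piA τ) ∧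
    dist (S.piA σ) (S.piA τ) ≤ (∏ l ∈ Finset.range k, S.ρ (σ l)) * diam S.D := by
  set a := S.piA (fun m => σ (m + k)) with ha
  set b := S.piA (fun m => τ (m + k)) with hb
  have hσ : S.piA σ = S.wmap σ k a := S.piA_eq_wmap k σ
  have hτ : S.piA τ = S.wmap σ k b := by
    rw [S.piA_eq_wmap k τ]
    exact (S.wmap_congr k σ τ b hpre).symm
  have hdist : dist (S.piA σ) (S.piA τ) =
      (∏ l ∈ Finset.range k, S.ρ (σ l)) * dist a b := by
    rw [hσ, hτ, S.dist_wmap k σ a b]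
  have hma := S.tail_mem_piece σ k
  have hmb := S.tail_mem_piece τ k
  have hlow : δ ≤ dist a b := hδ (σ k) (τ k) hk a hma b hmb
  have hamem : a ∈ S.D := S.piA_mem _
  have hbmem : b ∈ S.D := S.piA_mem _
  have hhigh : dist a b ≤ diam S.D := dist_le_diam_of_mem S.hDc.isBounded hamem hbmem
  constructor
  · rw [hdist]; exact mul_le_mul_of_nonneg_left hlow (S.prod_nonneg' σ k)
  · rw [hdist]; exact mul_le_mul_of_nonneg_left hhigh (S.prod_nonneg' σ k)

lemma exists_gap (S : Setup n)
    (hdisj : ∀ i j, i ≠ j → ((fun x => S.ρ i * x + S.d i) '' S.D) ∩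
      ((fun x => S.ρ j * x + S.d j) '' S.D) = ∅) :
    ∃ δ, 0 < δ ∧ ∀ i j, i ≠ j → ∀ a ∈ (fun x => S.ρ i * x + S.d i) '' S.D,
      ∀ b ∈ (fun x => S.ρ j * x + S.d j) '' S.D, δ ≤ dist a b := by
  have hpair : ∀ p : Fin n × Fin n, ∃ ε, 0 < ε ∧ (p.1 ≠ p.2 →
      ∀ a ∈ (fun x => S.ρ p.1 * x + S.d p.1) '' S.D,
      ∀ b ∈ (fun x => S.ρ p.2 * x + S.d p.2) '' S.D, ε ≤ dist a b) := by
    rintro ⟨i, j⟩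
    by_cases hij : i = j
    · exact ⟨1, one_pos, fun h => absurd hij h⟩
    · set A := (fun x => S.ρ i * x + S.d i) '' S.D with hA
      set B := (fun x => S.ρ j * x + S.d j) '' S.D with hBdef
      have hAc : IsCompact A := S.hDc.image (by continuity)
      have hBc : IsCompact B := S.hDc.image (by continuity)
      have hAne : A.Nonempty := S.hDne.image _
      have hBne : B.Nonempty := S.hDne.image _
      obtain ⟨a0, ha0, hmin⟩ := hAc.exists_isMinOn hAne
        (continuous_infDist_pt B).continuousOn
      have ha0B : a0 ∉ B := by
        intro hmem
        have : a0 ∈ A ∩ B := ⟨ha0, hmem⟩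
        rw [hdisj i j hij] at this
        exact this
      have hpos0 : 0 < infDist a0 B :=
        (hBc.isClosed.notMem_iff_infDist_pos hBne).mp ha0B
      refine ⟨infDist a0 B, hpos0, fun _ a ha b hb => ?_⟩
      calc infDist a0 B ≤ infDist a B := hmin ha
        _ ≤ dist a b := infDist_le_dist_of_mem hb
  choose ε hε using hpair
  have hune : (Finset.univ : Finset (Fin n × Fin n)).Nonempty :=
    ⟨(S.iz, S.iz), Finset.mem_univ _⟩
  refine ⟨Finset.univ.inf' hune ε, ?_, ?_⟩
  · exact (Finset.lt_inf'_iff hune).mpr fun p _ => (hε p).1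
  · intro i j hij a ha b hb
    exact le_trans (Finset.inf'_le ε (Finset.mem_univ (i, j))) ((hε (i, j)).2 hij a ha b hb)

end Setup
end DustProofAux

/-- any two dust-like self-similar sets in ℝ with the same
contraction vector are Lipschitz equivalent. -/
theorem dustlike_lipEquiv {n : ℕ} (hn : 1 ≤ n) (ρ : Fin n → ℝ)
    (hpos : ∀ i, 0 < ρ i) (hlt : ∀ i, ρ i < 1) (hsum : (∑ i, ρ i) < 1)
    (d d' : Fin n → ℝ) (D D' : Set ℝ)
    (hDc : IsCompact D) (hDne : D.Nonempty)
    (hDinv : D = ⋃ i, (fun x => ρ i * x + d i) '' D)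
    (hDdisj : ∀ i j, i ≠ j →
      ((fun x => ρ i * x + d i) '' D) ∩ ((fun x => ρ j * x + d j) '' D) = ∅)
    (hD'c : IsCompact D') (hD'ne : D'.Nonempty)
    (hD'inv : D' = ⋃ i, (fun x => ρ i * x + d' i) '' D')
    (hD'disj : ∀ i j, i ≠ j →
      ((fun x => ρ i * x + d' i) '' D') ∩ ((fun x => ρ j * x + d' j) '' D') = ∅) :
    LipEquivOn D D' := by
  classical
  set S : DustProofAux.Setup n := ⟨ρ, d, D, hn, hpos, hlt, hDc, hDne, hDinv⟩ with hSdef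
  set S' : DustProofAux.Setup n := ⟨ρ, d', D', hn, hpos, hlt, hD'c, hD'ne, hD'inv⟩ with hS'def
  rcases lt_or_ge n 2 with h2 | h2
  · -- n = 1 : both sets are singletons
    have hss : ∀ x ∈ D, ∀ y ∈ D, x = y := by
      intro x hx y hy
      have h1 : n = 1 := by omega
      have hsub : Subsingleton (Fin n) := by subst h1; infer_instance
      have haddr : S.addr x = S.addr y := funext fun k => @Subsingleton.elim _ hsub _ _
      rw [← S.piA_addr hx, ← S.piA_addr hy, haddr]
    have hss' : ∀ x ∈ D', ∀ y ∈ D', x = y := by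
      intro x hx y hy
      have h1 : n = 1 := by omega
      have hsub : Subsingleton (Fin n) := by subst h1; infer_instance
      have haddr : S'.addr x = S'.addr y := funext fun k => @Subsingleton.elim _ hsub _ _
      rw [← S'.piA_addr hx, ← S'.piA_addr hy, haddr]
    obtain ⟨y0, hy0⟩ := hD'ne
    refine ⟨fun _ => y0, 1, 1, one_pos, le_rfl,
      ⟨fun x _ => hy0, fun x hx y hy _ => hss x hx y hy, ?_⟩, ?_⟩
    · intro y hy
      obtain ⟨x0, hx0⟩ := hDne
      exact ⟨x0, hx0, hss' y0 hy0 y hy⟩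
    · intro x hx y hy
      have hxy := hss x hx y hy
      subst hxy
      simp
  · -- n ≥ 2
    obtain ⟨δ, hδ0, hδ⟩ := S.exists_gap hDdisj
    obtain ⟨δ', hδ'0, hδ'⟩ := S'.exists_gap hD'disj
    have hi0 : (0 : ℕ) < n := by omega
    have hi1 : (1 : ℕ) < n := by omega
    have hi01 : (⟨0, hi0⟩ : Fin n) ≠ ⟨1, hi1⟩ := by simp [Fin.ext_iff]
    have hRpos : 0 < Metric.diam D := by
      obtain ⟨z, hz⟩ := hDne
      have ha : ρ ⟨0, hi0⟩ * z + d ⟨0, hi0⟩ ∈ (fun x => ρ ⟨0, hi0⟩ * x + d ⟨0, hi0⟩) '' D :=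
        ⟨z, hz, rfl⟩
      have hb : ρ ⟨1, hi1⟩ * z + d ⟨1, hi1⟩ ∈ (fun x => ρ ⟨1, hi1⟩ * x + d ⟨1, hi1⟩) '' D :=
        ⟨z, hz, rfl⟩
      have h1 : δ ≤ dist (ρ ⟨0, hi0⟩ * z + d ⟨0, hi0⟩) (ρ ⟨1, hi1⟩ * z + d ⟨1, hi1⟩) :=
        hδ _ _ hi01 _ ha _ hb
      have h2 : dist (ρ ⟨0, hi0⟩ * z + d ⟨0, hi0⟩) (ρ ⟨1, hi1⟩ * z + d ⟨1, hi1⟩) ≤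
          Metric.diam D :=
        Metric.dist_le_diam_of_mem hDc.isBounded (S.mem_piece ⟨0, hi0⟩ hz)
          (S.mem_piece ⟨1, hi1⟩ hz)
      linarith
    have hR'pos : 0 < Metric.diam D' := by
      obtain ⟨z, hz⟩ := hD'ne
      have ha : ρ ⟨0, hi0⟩ * z + d' ⟨0, hi0⟩ ∈ (fun x => ρ ⟨0, hi0⟩ * x + d' ⟨0, hi0⟩) '' D' :=
        ⟨z, hz, rfl⟩
      have hb : ρ ⟨1, hi1⟩ * z + d' ⟨1, hi1⟩ ∈ (fun x => ρ ⟨1, hi1⟩ * x + d' ⟨1, hi1⟩) '' D' :=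
        ⟨z, hz, rfl⟩
      have h1 : δ' ≤ dist (ρ ⟨0, hi0⟩ * z + d' ⟨0, hi0⟩) (ρ ⟨1, hi1⟩ * z + d' ⟨1, hi1⟩) :=
        hδ' _ _ hi01 _ ha _ hb
      have h2 : dist (ρ ⟨0, hi0⟩ * z + d' ⟨0, hi0⟩) (ρ ⟨1, hi1⟩ * z + d' ⟨1, hi1⟩) ≤
          Metric.diam D' :=
        Metric.dist_le_diam_of_mem hD'c.isBounded (S'.mem_piece ⟨0, hi0⟩ hz)
          (S'.mem_piece ⟨1, hi1⟩ hz)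
      linarith
    have key : ∀ x ∈ D, ∀ y ∈ D, x ≠ y →
        (δ' / Metric.diam D) * dist x y ≤ dist (S'.piA (S.addr x)) (S'.piA (S.addr y)) ∧
        dist (S'.piA (S.addr x)) (S'.piA (S.addr y)) ≤ (Metric.diam D' / δ) * dist x y := by
      intro x hx y hy hxy
      have hπx : S.piA (S.addr x) = x := S.piA_addr hx
      have hπy : S.piA (S.addr y) = y := S.piA_addr hy
      have hne : S.addr x ≠ S.addr y := by
        intro h; exact hxy (by rw [← hπx, ← hπy, h])
      have hex : ∃ m, S.addr x m ≠ S.addr y m := Function.ne_iff.mp hne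
      have hk := Nat.find_spec hex
      have hpre : ∀ l, l < Nat.find hex → S.addr x l = S.addr y l :=
        fun l hl => not_not.mp (Nat.find_min hex hl)
      obtain ⟨hl1, hu1⟩ := S.dist_piA_bounds hδ (S.addr x) (S.addr y) (Nat.find hex) hpre hk
      obtain ⟨hl2, hu2⟩ := S'.dist_piA_bounds hδ' (S.addr x) (S.addr y) (Nat.find hex) hpre hk
      rw [hπx, hπy] at hl1 hu1
      rw [show Metric.diam S.D = Metric.diam D from rfl] at hu1
      rw [show Metric.diam S'.D = Metric.diam D' from rfl] at hu2
      rw [show (∏ l ∈ Finset.range (Nat.find hex), S'.ρ (S.addr x l)) =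
        ∏ l ∈ Finset.range (Nat.find hex), S.ρ (S.addr x l) from rfl] at hl2 hu2
      set P := ∏ l ∈ Finset.range (Nat.find hex), S.ρ (S.addr x l) with hP
      constructor
      · have e : (δ' / Metric.diam D) * (P * Metric.diam D) = P * δ' := by
          field_simp
        calc (δ' / Metric.diam D) * dist x y
            ≤ (δ' / Metric.diam D) * (P * Metric.diam D) :=
              mul_le_mul_of_nonneg_left hu1 (div_nonneg hδ'0.le Metric.diam_nonneg)
          _ = P * δ' := e
          _ ≤ _ := hl2
      · have e : P * Metric.diam D' = (P * δ) * (Metric.diam D' / δ) := by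
          field_simp
        calc dist (S'.piA (S.addr x)) (S'.piA (S.addr y)) ≤ P * Metric.diam D' := hu2
          _ = (P * δ) * (Metric.diam D' / δ) := e
          _ ≤ dist x y * (Metric.diam D' / δ) :=
              mul_le_mul_of_nonneg_right hl1 (div_nonneg Metric.diam_nonneg hδ0.le)
          _ = (Metric.diam D' / δ) * dist x y := mul_comm _ _
    refine ⟨fun x => S'.piA (S.addr x), min (δ' / Metric.diam D) (Metric.diam D' / δ),
      max (δ' / Metric.diam D) (Metric.diam D' / δ),
      lt_min (div_pos hδ'0 hRpos) (div_pos hR'pos hδ0), min_le_max, ⟨?_, ?_, ?_⟩, ?_⟩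
    · intro x _
      exact S'.piA_mem _
    · intro x hx y hy hf
      by_contra hxy
      have h0 : dist (S'.piA (S.addr x)) (S'.piA (S.addr y)) = 0 := by
        have : S'.piA (S.addr x) = S'.piA (S.addr y) := hf
        rw [this, dist_self]
      have hk := (key x hx y hy hxy).1
      rw [h0] at hk
      have hd : 0 < dist x y := dist_pos.mpr hxy
      nlinarith [div_pos hδ'0 hRpos]
    · intro y hy
      refine ⟨S.piA (S'.addr y), S.piA_mem _, ?_⟩
      have hx : S.piA (S'.addr y) ∈ D := S.piA_mem _
      have h1 : S.piA (S.addr (S.piA (S'.addr y))) = S.piA (S'.addr y) := S.piA_addr hx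
      have h2 : S.addr (S.piA (S'.addr y)) = S'.addr y := by
        by_contra h
        have hex : ∃ m, S.addr (S.piA (S'.addr y)) m ≠ S'.addr y m := Function.ne_iff.mp h
        have hk := Nat.find_spec hex
        have hpre : ∀ l, l < Nat.find hex → S.addr (S.piA (S'.addr y)) l = S'.addr y l :=
          fun l hl => not_not.mp (Nat.find_min hex hl)
        have hb := (S.dist_piA_bounds hδ _ _ (Nat.find hex) hpre hk).1
        rw [h1, dist_self] at hb
        have hPpos := S.prod_pos' (S.addr (S.piA (S'.addr y))) (Nat.find hex)
        nlinarith
      show S'.piA (S.addr (S.piA (S'.addr y))) = y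
      rw [h2]
      exact S'.piA_addr hy
    · intro x hx y hy
      by_cases hxy : x = y
      · subst hxy
        simp
      · obtain ⟨h1, h2⟩ := key x hx y hy hxy
        constructor
        · calc min (δ' / Metric.diam D) (Metric.diam D' / δ) * dist x y
              ≤ (δ' / Metric.diam D) * dist x y :=
                mul_le_mul_of_nonneg_right (min_le_left _ _) dist_nonneg
            _ ≤ _ := h1
        · calc dist (S'.piA (S.addr x)) (S'.piA (S.addr y))
              ≤ (Metric.diam D' / δ) * dist x y := h2
            _ ≤ max (δ' / Metric.diam D) (Metric.diam D' / δ) * dist x y :=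
                mul_le_mul_of_nonneg_right (le_max_right _ _) dist_nonneg
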